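/- If (M_t)_{t∈ℕ₀} is a nonnegative martingale with M_0 = 1 almost surely and the increments are not trivial (i.e., P(M_1/M_0 ≠ 1) > 0, with 0/0 := 1), then sup_{t∈ℕ₀} M_t has an atom at 1: P(sup_{t∈ℕ₀} M_t = 1) > 0. -/

import Mathlib

open MeasureTheory Filter
open scoped ENNReal

/-- If `(M_t)` is a nonnegative martingale with `M_0 = 1` a.s. and nontrivial first
increment (`P(M_1/M_0 ≠ 1) > 0`, with `0/0 := 1`), then `sup_t M_t` has an atom at `1`:
`P(sup_t M_t = 1) > 0`. -/
theorem sup_of_martingale_has_atom_at_one {Ω : Type*} {m0 : MeasurableSpace Ω}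
    (μ : Measure Ω) [IsProbabilityMeasure μ] (ℱ : Filtration ℕ m0)
    (M : ℕ → Ω → ℝ) (hM : Martingale M ℱ μ) (hpos : ∀ t ω, 0 ≤ M t ω)
    (h0 : ∀ᵐ ω ∂μ, M 0 ω = 1)
    (hnontrivial : 0 < μ {ω |
      (if M 0 ω = 0 ∧ M 1 ω = 0 then (1:ℝ) else M 1 ω / M 0 ω) ≠ 1}) :
    0 < μ {ω | (⨆ t : ℕ, ENNReal.ofReal (M t ω)) = 1} := by
  classical
  have hInt : ∀ n, Integrable (M n) μ := hM.integrable
  -- `P(M 1 ≠ 1) > 0`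
  have hne : 0 < μ {ω | M 1 ω ≠ 1} := by
    refine lt_of_lt_of_le hnontrivial (measure_mono_ae ?_)
    filter_upwards [h0] with ω hω hmem h1
    exact hmem (by simp [hω, h1])
  -- `∫ M 1 = 1`
  have hE1 : ∫ ω, M 1 ω ∂μ = 1 := by
    have h01 : ∫ ω in Set.univ, M 0 ω ∂μ = ∫ ω in Set.univ, M 1 ω ∂μ :=
      hM.setIntegral_eq (zero_le_one) MeasurableSet.univ
    rw [setIntegral_univ, setIntegral_univ] at h01
    rw [← h01, integral_congr_ae h0]
    simp
  -- `P(M 1 < 1) > 0`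
  have hlt : 0 < μ {ω | M 1 ω < 1} := by
    by_contra hc
    push_neg at hc
    have hnull : μ {ω | M 1 ω < 1} = 0 := le_antisymm hc bot_le
    have hge : ∀ᵐ ω ∂μ, 1 ≤ M 1 ω := by
      rw [ae_iff]; push_neg
      simpa [not_le] using hnull
    have hzero : ∫ ω, (M 1 ω - 1) ∂μ = 0 := by
      rw [integral_sub (hInt 1) (integrable_const 1)]
      simp [hE1]
    have heq : (fun ω => M 1 ω - 1) =ᵐ[μ] 0 := by
      refine (integral_eq_zero_iff_of_nonneg_ae ?_ ?_).1 hzero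
      · filter_upwards [hge] with ω hω
        simp only [Pi.zero_apply]
        linarith
      · exact (hInt 1).sub (integrable_const 1)
    have : μ {ω | M 1 ω ≠ 1} = 0 := by
      rw [← ae_iff] at *
      filter_upwards [heq] with ω hω
      simpa [sub_eq_zero] using hω
    exact absurd this hne.ne'
  -- find η > 0 with positive probability that `M 1 ≤ 1 - η`
  obtain ⟨n, hn⟩ : ∃ n : ℕ, 0 < μ {ω | M 1 ω ≤ 1 - 1 / (n + 1)} := by
    by_contra hc
    push_neg at hc
    have hnull : ∀ n : ℕ, μ {ω | M 1 ω ≤ 1 - 1 / (n + 1 : ℝ)} = 0 :=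
      fun n => le_antisymm (hc n) bot_le
    have hsub : {ω | M 1 ω < 1} ⊆ ⋃ n : ℕ, {ω | M 1 ω ≤ 1 - 1 / (n + 1 : ℝ)} := by
      intro ω hω
      obtain ⟨k, hk⟩ := exists_nat_one_div_lt (K := ℝ) (sub_pos.2 hω)
      exact Set.mem_iUnion.2 ⟨k, by simp only [Set.mem_setOf_eq]; linarith⟩
    exact absurd (le_antisymm (le_trans (measure_mono hsub)
      (le_of_eq (measure_iUnion_null hnull))) bot_le) hlt.ne'
  set η : ℝ := 1 / (n + 1) with hη_def
  have hη : 0 < η := by positivity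
  have hη1 : η ≤ 1 := by
    rw [hη_def, div_le_one (by positivity)]
    linarith [Nat.cast_nonneg (α := ℝ) n]
  set A : Set Ω := {ω | M 1 ω ≤ 1 - η} with hA_def
  have hA : MeasurableSet[ℱ 1] A :=
    measurableSet_le (hM.stronglyAdapted 1).measurable measurable_const
  have hAm : MeasurableSet A := ℱ.le 1 A hA
  have hApos : 0 < μ A := hn
  -- the shifted filtration and the localized process
  set G : Filtration ℕ m0 :=
    ⟨fun t => ℱ (t + 1), fun i j hij => ℱ.mono (by omega), fun t => ℱ.le (t + 1)⟩ with hG_def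
  set N : ℕ → Ω → ℝ := fun t => A.indicator (M (t + 1)) with hN_def
  have hNmart : Martingale N G μ := by
    constructor
    · intro t
      exact ((hM.stronglyAdapted (t + 1)).indicator (ℱ.mono (by omega) A hA))
    · intro i j hij
      have h1 : μ[N j | ℱ (i + 1)] =ᵐ[μ] A.indicator (μ[M (j + 1) | ℱ (i + 1)]) :=
        condExp_indicator (hInt (j + 1)) (ℱ.mono (by omega) A hA)
      have h2 : μ[M (j + 1) | ℱ (i + 1)] =ᵐ[μ] M (i + 1) :=
        hM.condExp_ae_eq (by omega)
      refine h1.trans ?_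
      filter_upwards [h2] with ω hω
      simp only [hN_def, Set.indicator_apply, hω]
  have hNnonneg : 0 ≤ N := fun t ω => Set.indicator_nonneg (fun x _ => hpos _ _) _
  have hNsub : Submartingale N G μ := hNmart.submartingale
  -- the bad event `B`
  set B : Set Ω := {ω | ∃ k, 1 ≤ N k ω} with hB_def
  have hBm : MeasurableSet B := by
    have : B = ⋃ k, {ω | 1 ≤ N k ω} := by
      ext ω; simp [hB_def, Set.mem_iUnion]
    rw [this]
    exact MeasurableSet.iUnion fun k =>
      measurableSet_le measurable_const
        ((hNsub.stronglyMeasurable k).measurable.le (G.le k))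
  -- bound on `∫ N 0`
  have hN0 : ∫ ω, N 0 ω ∂μ ≤ (1 - η) * (μ A).toReal := by
    have h1 : ∫ ω, N 0 ω ∂μ = ∫ ω in A, M 1 ω ∂μ := by
      simp only [hN_def]
      rw [integral_indicator hAm]
    have h2 : ∫ ω in A, M 1 ω ∂μ ≤ ∫ ω in A, (1 - η) ∂μ := by
      refine setIntegral_mono_on (hInt 1).integrableOn
        (integrableOn_const (measure_ne_top μ A)) hAm ?_
      intro ω hω; exact hω
    rw [h1]
    refine h2.trans ?_
    rw [setIntegral_const]
    rw [smul_eq_mul, mul_comm]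
    exact le_rfl
  -- bound `μ B` via Doob's maximal inequality
  have hbound : μ B ≤ ENNReal.ofReal ((1 - η) * (μ A).toReal) := by
    have hSeq : B = ⋃ m, {ω | (1 : ℝ) ≤
        (Finset.range (m + 1)).sup' Finset.nonempty_range_add_one fun k => N k ω} := by
      ext ω
      simp only [hB_def, Set.mem_setOf_eq, Set.mem_iUnion]
      constructor
      · rintro ⟨k, hk⟩
        exact ⟨k, le_trans hk (Finset.le_sup' (fun k => N k ω) (Finset.self_mem_range_succ k))⟩
      · rintro ⟨m, hm⟩
        by_contra hc
        push_neg at hc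
        exact absurd hm (not_le.2 ((Finset.sup'_lt_iff Finset.nonempty_range_add_one).2
          (fun k _ => hc k)))
    have hmono : Directed (· ⊆ ·) fun m => {ω | (1 : ℝ) ≤
        (Finset.range (m + 1)).sup' Finset.nonempty_range_add_one fun k => N k ω} := by
      refine (Monotone.directed_le ?_)
      intro a b hab ω hω
      simp only [Set.mem_setOf_eq] at hω ⊢
      refine le_trans hω (Finset.sup'_le Finset.nonempty_range_add_one _ ?_)
      intro k hk
      exact Finset.le_sup' (fun k => N k ω) (Finset.mem_range.2 (lt_of_lt_of_le
        (Finset.mem_range.1 hk) (by omega)))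
    rw [hSeq, hmono.measure_iUnion]
    refine iSup_le fun m => ?_
    have hmax := maximal_ineq hNsub hNnonneg (ε := 1) m
    simp only [ENNReal.coe_one, one_smul, NNReal.coe_one, one_mul] at hmax
    refine hmax.trans ?_
    refine ENNReal.ofReal_le_ofReal ?_
    have hle : ∫ ω in {ω | (1:ℝ) ≤ (Finset.range (m + 1)).sup'
        Finset.nonempty_range_add_one fun k => N k ω}, N m ω ∂μ ≤ ∫ ω, N m ω ∂μ :=
      setIntegral_le_integral (hNsub.integrable m)
        (Filter.Eventually.of_forall fun ω => hNnonneg m ω)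
    refine hle.trans ?_
    have : ∫ ω, N m ω ∂μ = ∫ ω, N 0 ω ∂μ := by
      have := hNmart.setIntegral_eq (i := 0) (j := m) (Nat.zero_le m)
        (@MeasurableSet.univ Ω (G 0))
      rw [setIntegral_univ, setIntegral_univ] at this
      exact this.symm
    rw [this]
    exact hN0
  -- `μ B < μ A`
  have hBA : μ B < μ A := by
    refine lt_of_le_of_lt hbound ?_
    calc ENNReal.ofReal ((1 - η) * (μ A).toReal)
        < ENNReal.ofReal ((μ A).toReal) := by
          refine (ENNReal.ofReal_lt_ofReal_iff ?_).2 ?_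
          · exact ENNReal.toReal_pos hApos.ne' (measure_ne_top μ A)
          · nlinarith [ENNReal.toReal_pos hApos.ne' (measure_ne_top μ A)]
      _ = μ A := ENNReal.ofReal_toReal (measure_ne_top μ A)
  -- so `A \ B` has positive measure
  have hdiff : 0 < μ (A \ B) := by
    by_contra hc
    push_neg at hc
    have h0' : μ (A \ B) = 0 := le_antisymm hc bot_le
    have : μ A ≤ μ B := by
      calc μ A ≤ μ ((A \ B) ∪ B) := measure_mono (fun ω hω => by
            by_cases hωB : ω ∈ B
            · exact Or.inr hωB
            · exact Or.inl ⟨hω, hωB⟩)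
        _ ≤ μ (A \ B) + μ B := measure_union_le _ _
        _ = μ B := by rw [h0', zero_add]
    exact absurd (lt_of_le_of_lt this hBA) (lt_irrefl _)
  -- on `A \ B` (a.e.), the supremum equals 1
  refine lt_of_lt_of_le hdiff (measure_mono_ae ?_)
  filter_upwards [h0] with ω hω hmem
  obtain ⟨hωA, hωB⟩ := hmem
  show (⨆ t, ENNReal.ofReal (M t ω)) = 1
  refine le_antisymm ?_ ?_
  · refine iSup_le fun t => ?_
    cases t with
    | zero => simp [hω]
    | succ s =>
      have hN : ¬ (1 : ℝ) ≤ N s ω := fun h => hωB ⟨s, h⟩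
      push_neg at hN
      have : N s ω = M (s + 1) ω := by
        simp only [hN_def, Set.indicator_of_mem hωA]
      rw [this] at hN
      exact ENNReal.ofReal_le_one.2 hN.le
  · refine le_trans ?_ (le_iSup (fun t => ENNReal.ofReal (M t ω)) 0)
    simp [hω]
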